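/- For every Laurent polynomial ξ ∈ ℤ[q,q^{-1}] there exists a unique ξ′ ∈ ℤ[q,q^{-1}] such that ξ′ is invariant under the ring involution q ↦ q^{-1} and ξ − ξ′ ∈ q^{-1}ℤ[q^{-1}] (i.e. ξ − ξ′ is a polynomial in q^{-1} with zero constant term). -/

import Mathlib

/-!
STATEMENT 18: For every Laurent polynomial `ξ ∈ ℤ[q,q⁻¹]` there exists a unique
`ξ' ∈ ℤ[q,q⁻¹]` such that `ξ'` is invariant under the bar involution `q ↦ q⁻¹` and
`ξ - ξ' ∈ q⁻¹ ℤ[q⁻¹]`, i.e. `ξ - ξ'` is supported in strictly negative powers of `q`.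

We use Mathlib's `LaurentPolynomial ℤ = ℤ[T;T⁻¹]`; the bar involution is
`LaurentPolynomial.invert` (the ring automorphism determined by `T ↦ T⁻¹`), and a Laurent
polynomial lies in `q⁻¹ ℤ[q⁻¹]` iff its coefficient at every exponent `k ≥ 0` vanishes.
-/

open LaurentPolynomial

/-- The symmetrization of a Laurent polynomial: coefficient at `k` is the coefficient
of `ξ` at `|k|`. -/
noncomputable def chariSymm (ξ : LaurentPolynomial ℤ) : LaurentPolynomial ℤ := by
  classical
  exact AddMonoidAlgebra.ofCoeff <| Finsupp.mk
    ((ξ.coeff.support ∪ ξ.coeff.support.image (Neg.neg)).filter (fun k => ξ.coeff |k| ≠ 0))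
    (fun k => ξ.coeff |k|)
    (by
      intro k
      simp only [Finset.mem_filter, Finset.mem_union, Finset.mem_image,
        Finsupp.mem_support_iff, ne_eq]
      constructor
      · rintro ⟨-, h⟩; exact h
      · intro h
        refine ⟨?_, h⟩
        rcases abs_choice k with hk | hk
        · left; rwa [← hk]
        · right; exact ⟨|k|, h, by omega⟩)

@[simp] lemma chariSymm_apply (ξ : LaurentPolynomial ℤ) (k : ℤ) :
    (chariSymm ξ).coeff k = ξ.coeff |k| := rfl

theorem chariXi_bar_invariant_truncation (ξ : LaurentPolynomial ℤ) :
    ∃! ξ' : LaurentPolynomial ℤ,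
      invert ξ' = ξ' ∧ ∀ k : ℤ, 0 ≤ k → AddMonoidAlgebra.coeff (ξ - ξ') k = 0 := by
  refine ⟨chariSymm ξ, ⟨?_, ?_⟩, ?_⟩
  · ext n
    simp [abs_neg]
  · intro k hk
    rw [AddMonoidAlgebra.coeff_sub, Finsupp.sub_apply, chariSymm_apply, abs_of_nonneg hk, sub_self]
  · rintro η ⟨hinv, hη⟩
    ext n
    have key : ∀ k : ℤ, 0 ≤ k → η.coeff k = ξ.coeff k := by
      intro k hk
      have := hη k hk
      rw [AddMonoidAlgebra.coeff_sub, Finsupp.sub_apply] at this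
      omega
    have hsym : η.coeff (-n) = η.coeff n := by
      conv_rhs => rw [← hinv]
      simp
    rcases le_or_gt 0 n with hn | hn
    · rw [key n hn, chariSymm_apply, abs_of_nonneg hn]
    · rw [← hsym, key (-n) (by omega), chariSymm_apply, abs_of_neg hn]
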